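/- Let n ≥ 3 and W the n × n Wielandt matrix. Then the least positive integer k such that every entry of column n-1 of W^k is positive equals n^2 - 3n + 3. -/

import Mathlib

/-- The `n × n` Wielandt matrix: `W i j = 1` iff (`i ≥ 2` and `j = i - 1`) or
(`i = 1` and `j ∈ {n-1, n}`), written here with 0-based indexing via `Fin n`. -/
def wielandt (n : ℕ) : Matrix (Fin n) (Fin n) ℕ := fun i j =>
  if (1 ≤ i.val ∧ j.val + 1 = i.val) ∨ (i.val = 0 ∧ (j.val = n - 2 ∨ j.val = n - 1))
  then 1 else 0

/-- Walk-length characterization: there is a walk of length `k` from `u` to `n-2`. -/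
def Ccond (n k u : ℕ) : Prop :=
  u + 2 = k + n ∨ ∃ a b, k = u + a*n + b*(n-1) + 1 ∨ k = u + a*n + b*(n-1) + 2

lemma recS (n k u : ℕ) (hu : 1 ≤ u) : Ccond n (k+1) u ↔ Ccond n k (u-1) := by
  constructor
  · rintro (h | ⟨a, b, h | h⟩)
    · left; omega
    · exact Or.inr ⟨a, b, Or.inl (by omega)⟩
    · exact Or.inr ⟨a, b, Or.inr (by omega)⟩
  · rintro (h | ⟨a, b, h | h⟩)
    · left; omega
    · exact Or.inr ⟨a, b, Or.inl (by omega)⟩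
    · exact Or.inr ⟨a, b, Or.inr (by omega)⟩

lemma rec0 (n k : ℕ) (hn : 3 ≤ n) :
    Ccond n (k+1) 0 ↔ Ccond n k (n-2) ∨ Ccond n k (n-1) := by
  constructor
  · rintro (h | ⟨a, b, h | h⟩)
    · omega
    · rcases b with _ | b
      · rcases a with _ | a
        · left; left; omega
        · right; refine Or.inr ⟨a, 0, Or.inl ?_⟩
          have e : (a+1)*n = a*n + n := by ring
          omega
      · left; refine Or.inr ⟨a, b, Or.inl ?_⟩
        have e : (b+1)*(n-1) = b*(n-1) + (n-1) := by ring
        omega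
    · rcases b with _ | b
      · rcases a with _ | a
        · right; left; omega
        · right; refine Or.inr ⟨a, 0, Or.inr ?_⟩
          have e : (a+1)*n = a*n + n := by ring
          omega
      · left; refine Or.inr ⟨a, b, Or.inr ?_⟩
        have e : (b+1)*(n-1) = b*(n-1) + (n-1) := by ring
        omega
  · rintro ((h | ⟨a, b, h | h⟩) | (h | ⟨a, b, h | h⟩))
    · refine Or.inr ⟨0, 0, Or.inl ?_⟩; omega
    · refine Or.inr ⟨a, b+1, Or.inl ?_⟩
      have e : (b+1)*(n-1) = b*(n-1) + (n-1) := by ring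
      omega
    · refine Or.inr ⟨a, b+1, Or.inr ?_⟩
      have e : (b+1)*(n-1) = b*(n-1) + (n-1) := by ring
      omega
    · refine Or.inr ⟨0, 0, Or.inr ?_⟩; omega
    · refine Or.inr ⟨a+1, b, Or.inl ?_⟩
      have e : (a+1)*n = a*n + n := by ring
      omega
    · refine Or.inr ⟨a+1, b, Or.inr ?_⟩
      have e : (a+1)*n = a*n + n := by ring
      omega

lemma pos_iff (n : ℕ) (hn : 3 ≤ n) (k : ℕ) (u : Fin n) :
    0 < (wielandt n ^ k) u ⟨n - 2, Nat.sub_lt (by omega) (by omega)⟩ ↔ Ccond n k u.val := by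
  induction k generalizing u with
  | zero =>
    rw [pow_zero, Matrix.one_apply]
    constructor
    · intro h
      have hu : u = ⟨n-2, by omega⟩ := by
        by_contra hne
        rw [if_neg hne] at h
        exact lt_irrefl 0 h
      left
      have : u.val = n - 2 := by rw [hu]
      omega
    · intro h
      have hu : u.val = n - 2 := by
        rcases h with h | ⟨a, b, h | h⟩ <;> omega
      rw [if_pos (Fin.ext hu)]
      norm_num
  | succ k ih =>
    rw [pow_succ', Matrix.mul_apply]
    have hsum : (0 < ∑ v : Fin n, wielandt n u v * (wielandt n ^ k) v ⟨n-2, by omega⟩) ↔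
        ∃ v : Fin n, wielandt n u v ≠ 0 ∧ (wielandt n ^ k) v ⟨n-2, by omega⟩ ≠ 0 := by
      rw [Nat.pos_iff_ne_zero, Ne, Finset.sum_eq_zero_iff]
      push_neg
      simp only [Finset.mem_univ, true_and, Nat.mul_ne_zero_iff]
    rw [hsum]
    have hW : ∀ v : Fin n, wielandt n u v ≠ 0 ↔
        ((1 ≤ u.val ∧ v.val + 1 = u.val) ∨ (u.val = 0 ∧ (v.val = n-2 ∨ v.val = n-1))) := by
      intro v
      unfold wielandt
      split <;> simp_all
    rcases Nat.eq_zero_or_pos u.val with hu | hu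
    · rw [hu, rec0 n k hn]
      constructor
      · rintro ⟨v, hWv, hpos⟩
        rw [hW] at hWv
        rcases hWv with ⟨h1, _⟩ | ⟨_, hv | hv⟩
        · omega
        · left
          have h2 := (ih v).mp (Nat.pos_of_ne_zero hpos)
          rwa [hv] at h2
        · right
          have h2 := (ih v).mp (Nat.pos_of_ne_zero hpos)
          rwa [hv] at h2
      · rintro (h | h)
        · refine ⟨⟨n-2, by omega⟩, ?_, ?_⟩
          · rw [hW]; exact Or.inr ⟨hu, Or.inl rfl⟩
          · exact Nat.pos_iff_ne_zero.mp ((ih ⟨n-2, by omega⟩).mpr h)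
        · refine ⟨⟨n-1, by omega⟩, ?_, ?_⟩
          · rw [hW]; exact Or.inr ⟨hu, Or.inr rfl⟩
          · exact Nat.pos_iff_ne_zero.mp ((ih ⟨n-1, by omega⟩).mpr h)
    · have hv' : u.val - 1 < n := by omega
      rw [recS n k u.val hu]
      constructor
      · rintro ⟨v, hWv, hpos⟩
        rw [hW] at hWv
        rcases hWv with ⟨_, h2⟩ | ⟨h0, _⟩
        · have hvv : v = ⟨u.val - 1, hv'⟩ := by
            apply Fin.ext
            simp only [Fin.val_mk]
            omega
          have h3 := (ih v).mp (Nat.pos_of_ne_zero hpos)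
          rwa [hvv] at h3
        · omega
      · intro h
        refine ⟨⟨u.val - 1, hv'⟩, ?_, ?_⟩
        · rw [hW]
          refine Or.inl ⟨hu, ?_⟩
          simp only [Fin.val_mk]
          omega
        · exact Nat.pos_iff_ne_zero.mp ((ih ⟨u.val - 1, hv'⟩).mpr h)

lemma mem_arith (n u : ℕ) (hn : 3 ≤ n) (hu : u < n) : Ccond n (n^2 - 3*n + 3) u := by
  obtain ⟨m, rfl⟩ : ∃ m, n = m + 3 := ⟨n - 3, by omega⟩
  have hK : (m+3)^2 - 3*(m+3) + 3 = m*m + 3*m + 3 := by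
    have e : (m+3)^2 = m*m + 6*m + 9 := by ring
    omega
  rw [hK]
  right
  match u, hu with
  | 0, _ =>
    refine ⟨0, m+1, Or.inl ?_⟩
    have e : (m+1)*((m+3)-1) = m*m + 3*m + 2 := by
      have : (m+3)-1 = m+2 := by omega
      rw [this]; ring
    omega
  | 1, _ =>
    refine ⟨m, 0, Or.inr ?_⟩
    have e : m*(m+3) = m*m + 3*m := by ring
    omega
  | (v+2), hu =>
    obtain ⟨w, hw⟩ : ∃ w, m = v + w := ⟨m - v, by omega⟩
    refine ⟨w, v, Or.inl ?_⟩
    have e1 : w*(m+3) = w*v + w*w + 3*w := by rw [hw]; ring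
    have e2 : v*((m+3)-1) = v*v + v*w + 2*v := by
      have : (m+3)-1 = m+2 := by omega
      rw [this, hw]; ring
    have e3 : m*m = v*v + 2*(v*w) + w*w := by rw [hw]; ring
    have e4 : w*v = v*w := by ring
    omega

lemma lb_arith (n k : ℕ) (hn : 3 ≤ n) (hk : 0 < k) (h : ∀ u < n, Ccond n k u) :
    n^2 - 3*n + 3 ≤ k := by
  obtain ⟨m, rfl⟩ : ∃ m, n = m + 3 := ⟨n - 3, by omega⟩
  have hK : (m+3)^2 - 3*(m+3) + 3 = m*m + 3*m + 3 := by
    have e : (m+3)^2 = m*m + 6*m + 9 := by ring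
    omega
  rw [hK]
  by_contra hcon
  push_neg at hcon
  -- k ≤ m*m + 3*m + 2
  rcases le_or_gt k (m+2) with hsmall | hbig
  · -- u = k fails
    rcases h k (by omega) with h1 | ⟨a, b, h1 | h1⟩ <;> omega
  · -- n ≤ k; note m ≥ 1 since k ≥ m+3 and k ≤ m*m+3*m+2
    have hm : 1 ≤ m := by
      by_contra hm0
      have : m = 0 := by omega
      subst this
      simp at hcon
      omega
    obtain ⟨q, u, hult, hk3⟩ : ∃ q u, u < m+3 ∧ k = q*(m+3) + u + 3 := by
      refine ⟨(k-3)/(m+3), (k-3)%(m+3), Nat.mod_lt _ (by omega), ?_⟩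
      have h1 := Nat.div_add_mod (k-3) (m+3)
      have h2 : (m+3) * ((k-3)/(m+3)) = ((k-3)/(m+3))*(m+3) := Nat.mul_comm _ _
      omega
    have hqlt : q < m := by
      by_contra hge
      push_neg at hge
      have h1 : m*(m+3) ≤ q*(m+3) := Nat.mul_le_mul_right _ hge
      have h2 : m*(m+3) = m*m + 3*m := by ring
      omega
    rcases h u (by omega) with h1 | ⟨a, b, h1 | h1⟩
    · omega
    all_goals {
      -- k = u + a*(m+3) + b*(m+2) + t, t = 1 or 2
      have hsub : (m+3) - 1 = m + 2 := by omega
      rw [hsub] at h1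
      have ha : a ≤ q := by
        by_contra hge
        push_neg at hge
        have h2 : (q+1)*(m+3) ≤ a*(m+3) := Nat.mul_le_mul_right _ hge
        have h3 : (q+1)*(m+3) = q*(m+3) + (m+3) := by ring
        omega
      obtain ⟨c, rfl⟩ : ∃ c, q = a + c := ⟨q - a, by omega⟩
      have e1 : (a+c)*(m+3) = a*(m+3) + c*(m+2) + c := by ring
      -- now : c*(m+2) + c + 3 = b*(m+2) + t
      rcases le_or_gt c b with hcb | hcb
      · obtain ⟨d, rfl⟩ : ∃ d, b = c + d := ⟨b - c, by omega⟩
        have e2 : (c+d)*(m+2) = c*(m+2) + d*(m+2) := by ring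
        -- c + 3 = d*(m+2) + t with c ≤ q-a... c < m
        rcases d with _ | d
        · omega
        · have e3 : (d+1)*(m+2) = d*(m+2) + m + 2 := by ring
          omega
      · obtain ⟨d, rfl⟩ : ∃ d, c = b + d + 1 := ⟨c - b - 1, by omega⟩
        have e2 : (b+d+1)*(m+2) = b*(m+2) + d*(m+2) + m + 2 := by ring
        omega
    }

/-- The least positive `k` such that every entry of column `n-1` of `W^k` is positive
is `n^2 - 3n + 3`. -/
theorem wielandt_local_exponent (n : ℕ) (hn : 3 ≤ n) :
    IsLeast {k : ℕ | 0 < k ∧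
        ∀ u : Fin n, 0 < (wielandt n ^ k) u ⟨n - 2, by omega⟩}
      (n ^ 2 - 3 * n + 3) := by
  constructor
  · refine ⟨by omega, fun u => ?_⟩
    exact (pos_iff n hn _ u).mpr (mem_arith n u.val hn u.isLt)
  · rintro k ⟨hk0, hk⟩
    exact lb_arith n k hn hk0 (fun u hu => (pos_iff n hn k ⟨u, hu⟩).mp (hk ⟨u, hu⟩))
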